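/- Let G be a graph with a perfect matching M, and let T be an independent set of vertices of G. Let M_T be the set of edges of M having an endpoint in T. If the subgraph of G formed by the union of all paths of length 2 whose two endpoints both lie in T contains no M-alternating cycle, then the forcing number of M satisfies f(G,M) ≤ |M| − |T|. -/

import Mathlib

open SimpleGraph

variable {V : Type*}

/-- `S` is a forcing set of the perfect matching `M` of `G`: a subset of the edges of `M`
contained in no other perfect matching of `G`. -/
def IsForcingSet (G : SimpleGraph V) (M : G.Subgraph) (S : Set (Sym2 V)) : Prop :=
  S ⊆ M.edgeSet ∧ ∀ M' : G.Subgraph, M'.IsPerfectMatching → S ⊆ M'.edgeSet → M' = M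

/-- The forcing number of a perfect matching: minimum size of a forcing set. -/
noncomputable def forcingNum (G : SimpleGraph V) (M : G.Subgraph) : ℕ :=
  sInf {k | ∃ S : Set (Sym2 V), IsForcingSet G M S ∧ S.ncard = k}

/-- The maximum forcing number of `G`. -/
noncomputable def maxForcingNum (G : SimpleGraph V) : ℕ :=
  sSup {k | ∃ M : G.Subgraph, M.IsPerfectMatching ∧ forcingNum G M = k}

/-- The edges of the list `l`, read cyclically, alternate in and out of the edge set `M`. -/
def CyclicAlt (M : Set (Sym2 V)) (l : List (Sym2 V)) : Prop :=
  (l ++ l.take 1).Chain' (fun e f => (e ∈ M) ↔ (f ∉ M))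

lemma bind_pair_eq_map {α : Type*} (f g : ℕ → α) (p : ℕ) :
    (List.range p).flatMap (fun i => [f i, g i]) =
    (List.range (2*p)).map (fun k => if Even k then f (k/2) else g (k/2)) := by
  induction p with
  | zero => simp
  | succ n ih =>
    rw [List.range_succ, show 2*(n+1) = (2*n)+1+1 from by ring, List.range_succ,
      List.range_succ]
    simp only [List.flatMap_append, List.map_append, ih]
    simp [Nat.even_add_one, Nat.mul_div_cancel_left, parity_simps]
    congr 1
    omega

lemma chain'_cyclic {α : Type*} (R : α → α → Prop) (f : ℕ → α) (n : ℕ) (hn : 0 < n)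
    (h : ∀ i, i + 1 < n → R (f i) (f (i+1))) (hlast : R (f (n-1)) (f 0)) :
    List.Chain' R ((List.range n).map f ++ [f 0]) := by
  have heq : (List.range n).map f ++ [f 0]
      = (List.range (n+1)).map (fun k => if k = n then f 0 else f k) := by
    rw [List.range_succ, List.map_append]
    simp only [List.map_cons, List.map_nil, if_pos rfl]
    congr 1
    apply List.map_congr_left
    intro a ha
    rw [List.mem_range] at ha
    simp [Nat.ne_of_lt ha]
  rw [heq]
  show List.IsChain R _
  rw [List.isChain_map, List.isChain_range_succ]
  intro m hm
  by_cases hmn : m + 1 = n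
  · simp only [if_neg (by omega : m ≠ n), if_pos hmn]
    have : m = n - 1 := by omega
    subst this; exact hlast
  · simp only [if_neg (by omega : m ≠ n), if_neg hmn]
    exact h m (by omega)

def pairFun {α : Type*} (f g : ℕ → α) (k : ℕ) : α := if Even k then f (k/2) else g (k/2)

lemma bind_pair_eq_map' {α : Type*} (f g : ℕ → α) (p : ℕ) :
    (List.range p).flatMap (fun i => [f i, g i]) = (List.range (2*p)).map (pairFun f g) :=
  bind_pair_eq_map f g p

lemma map_range_take_one {α : Type*} (f : ℕ → α) (n : ℕ) (hn : 0 < n) :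
    ((List.range n).map f).take 1 = [f 0] := by
  obtain ⟨n', rfl⟩ : ∃ n', n = n'+1 := ⟨n-1, by omega⟩
  rw [List.range_succ_eq_map]
  simp

lemma map_range_shift {α : Type*} (f : ℕ → α) (n : ℕ) (hn : 0 < n) :
    (List.range n).map f = f 0 :: (List.range (n-1)).map (fun a => f (a+1)) := by
  obtain ⟨n', rfl⟩ : ∃ n', n = n'+1 := ⟨n-1, by omega⟩
  rw [List.range_succ_eq_map]
  simp [List.map_map, Function.comp]

def altWalk (G : SimpleGraph V) (t x : ℕ → V)
    (h1 : ∀ i, G.Adj (t i) (x i)) (h2 : ∀ i, G.Adj (x i) (t (i+1))) :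
    (n : ℕ) → G.Walk (t 0) (t n)
  | 0 => Walk.nil
  | n+1 => (altWalk G t x h1 h2 n).append
      (Walk.cons (h1 n) (Walk.cons (h2 n) Walk.nil))

lemma altWalk_support (G : SimpleGraph V) (t x : ℕ → V)
    (h1 : ∀ i, G.Adj (t i) (x i)) (h2 : ∀ i, G.Adj (x i) (t (i+1))) (n : ℕ) :
    (altWalk G t x h1 h2 n).support = (List.range n).flatMap (fun i => [t i, x i]) ++ [t n] := by
  induction n with
  | zero => simp [altWalk]
  | succ n ih =>
    rw [altWalk, Walk.support_append, ih, List.range_succ]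
    simp

lemma altWalk_edges (G : SimpleGraph V) (t x : ℕ → V)
    (h1 : ∀ i, G.Adj (t i) (x i)) (h2 : ∀ i, G.Adj (x i) (t (i+1))) (n : ℕ) :
    (altWalk G t x h1 h2 n).edges
      = (List.range n).flatMap (fun i => [s(t i, x i), s(x i, t (i+1))]) := by
  induction n with
  | zero => simp [altWalk]
  | succ n ih =>
    rw [altWalk, Walk.edges_append, ih, List.range_succ]
    simp

/-- marked-vertex lemma. -/
theorem stmt0 (G : SimpleGraph V) [Fintype V] (M : G.Subgraph)
    (hM : M.IsPerfectMatching) (T : Set V)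
    (hT : ∀ a ∈ T, ∀ b ∈ T, ¬ G.Adj a b)
    (hno : ¬ ∃ (v : V) (w : G.Walk v v), w.IsCycle ∧
      (∀ e ∈ w.edges, e ∈ {e | ∃ a b c, a ∈ T ∧ c ∈ T ∧ a ≠ c ∧
        G.Adj a b ∧ G.Adj b c ∧ (e = s(a, b) ∨ e = s(b, c))}) ∧
      CyclicAlt M.edgeSet w.edges) :
    forcingNum G M ≤ M.edgeSet.ncard - T.ncard := by
  classical
  have hMex : ∀ v, ∃! w, M.Adj v w := Subgraph.isPerfectMatching_iff.mp hM
  set m : V → V := fun v => (hMex v).choose with hmdef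
  have hmAdj : ∀ v, M.Adj v (m v) := fun v => (hMex v).choose_spec.1
  have hmUniq : ∀ v w, M.Adj v w → w = m v := fun v w h => (hMex v).choose_spec.2 w h
  have hmInv : ∀ v, m (m v) = v := fun v => (hmUniq (m v) v (hmAdj v).symm).symm
  set S : Set (Sym2 V) := {e | e ∈ M.edgeSet ∧ ∀ t ∈ T, t ∉ e} with hSdef
  have hSsub : S ⊆ M.edgeSet := fun e he => he.1
  -- forcing property
  have hforce : ∀ M' : G.Subgraph, M'.IsPerfectMatching → S ⊆ M'.edgeSet → M' = M := by
    intro M' hM' hSM'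
    by_contra hne
    have hM'ex : ∀ v, ∃! w, M'.Adj v w := Subgraph.isPerfectMatching_iff.mp hM'
    set m' : V → V := fun v => (hM'ex v).choose with hm'def
    have hm'Adj : ∀ v, M'.Adj v (m' v) := fun v => (hM'ex v).choose_spec.1
    have hm'Uniq : ∀ v w, M'.Adj v w → w = m' v := fun v w h => (hM'ex v).choose_spec.2 w h
    have hm'Inv : ∀ v, m' (m' v) = v := fun v => (hm'Uniq (m' v) v (hm'Adj v).symm).symm
    set σ : V → V := fun v => m (m' v) with hσdef
    set D : Set V := {t | t ∈ T ∧ m' t ≠ m t} with hDdef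
    have hstep : ∀ t ∈ D, m' t ∉ T ∧ σ t ∈ T ∧ σ t ∈ D ∧ σ t ≠ t := by
      rintro t ⟨htT, htne⟩
      have hσt : σ t = m (m' t) := rfl
      have hxT : m' t ∉ T := fun hxT => hT t htT (m' t) hxT (M'.adj_sub (hm'Adj t))
      have hσne : σ t ≠ t := by
        intro h
        rw [hσt] at h
        have := congrArg m h
        rw [hmInv] at this
        exact htne this
      have hnotM' : s(m' t, m (m' t)) ∉ M'.edgeSet := by
        rw [Subgraph.mem_edgeSet]
        intro h
        have h2 := hm'Uniq _ _ h
        rw [hm'Inv] at h2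
        have := congrArg m h2
        rw [hmInv] at this
        exact htne this
      have hinM : s(m' t, m (m' t)) ∈ M.edgeSet := Subgraph.mem_edgeSet.mpr (hmAdj _)
      have hnotS : s(m' t, m (m' t)) ∉ S := fun h => hnotM' (hSM' h)
      have hex : ∃ u ∈ T, u ∈ s(m' t, m (m' t)) := by
        by_contra hc
        push_neg at hc
        exact hnotS ⟨hinM, hc⟩
      obtain ⟨u, huT, hue⟩ := hex
      rw [Sym2.mem_iff] at hue
      have hσT : σ t ∈ T := by
        rcases hue with h | h
        · exact absurd (h ▸ huT) hxT
        · rw [hσt]; exact h ▸ huT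
      refine ⟨hxT, hσT, ⟨hσT, ?_⟩, hσne⟩
      intro h
      have hmσ : m (σ t) = m' t := by rw [hσt, hmInv]
      rw [hmσ] at h
      have h3 := congrArg m' h
      simp only [hm'Inv] at h3
      exact hσne h3
    -- find an element of D
    have hMdiff : ∃ a b, M.Adj a b ∧ ¬ M'.Adj a b := by
      by_contra hc
      push_neg at hc
      apply hne
      have hverts : M'.verts = M.verts := by
        rw [hM'.2.verts_eq_univ, hM.2.verts_eq_univ]
      refine Subgraph.ext hverts ?_
      ext a b
      constructor
      · intro h
        have h1 := hc a (m a) (hmAdj a)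
        have h2 := hm'Uniq _ _ h1
        have h3 := hm'Uniq _ _ h
        rw [h3, ← h2]
        exact hmAdj a
      · exact hc a b
    have hD0 : ∃ t0, t0 ∈ D := by
      obtain ⟨a, b, hab, hnab⟩ := hMdiff
      have hb : b = m a := hmUniq a b hab
      have hm'a : m' a ≠ b := by
        intro h
        exact hnab (h ▸ hm'Adj a)
      have hinM : s(a, b) ∈ M.edgeSet := Subgraph.mem_edgeSet.mpr hab
      have hnotM' : s(a, b) ∉ M'.edgeSet := fun h => hnab (Subgraph.mem_edgeSet.mp h)
      have hnotS : s(a, b) ∉ S := fun h => hnotM' (hSM' h)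
      have hex : ∃ u ∈ T, u ∈ s(a, b) := by
        by_contra hcc
        push_neg at hcc
        exact hnotS ⟨hinM, hcc⟩
      obtain ⟨u, huT, hue⟩ := hex
      rw [Sym2.mem_iff] at hue
      rcases hue with rfl | rfl
      · exact ⟨u, huT, fun h => hm'a (h.trans hb.symm)⟩
      · refine ⟨u, huT, ?_⟩
        have hmu : m u = a := by
          have := hmUniq u a hab.symm
          exact this.symm
        rw [hmu]
        intro h
        exact hnab (h ▸ hm'Adj u).symm
    obtain ⟨t0, ht0⟩ := hD0
    set tq : ℕ → V := fun n => σ^[n] t0 with htqdef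
    have htD : ∀ n, tq n ∈ D := by
      intro n
      induction n with
      | zero => exact ht0
      | succ n ih =>
        have : tq (n+1) = σ (tq n) := Function.iterate_succ_apply' σ n t0
        rw [this]
        exact (hstep _ ih).2.2.1
    have hσinj : Function.Injective σ := by
      intro u v h
      have h1 := congrArg m h
      simp only [hσdef, hmInv] at h1
      have h2 := congrArg m' h1
      simp only [hm'Inv] at h2
      exact h2
    have hcancel : ∀ i k, tq (i + k) = tq i → tq k = t0 := by
      intro i k h
      have h1 : σ^[i] (σ^[k] t0) = σ^[i] t0 := by
        rw [← Function.iterate_add_apply]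
        exact h
      exact (hσinj.iterate i) h1
    have hper : ∃ n, 0 < n ∧ tq n = t0 := by
      obtain ⟨i, j, hij, hev⟩ := Finite.exists_ne_map_eq_of_infinite tq
      rcases hij.lt_or_gt with h | h
      · exact ⟨j - i, by omega, hcancel i (j - i) (by rw [Nat.add_sub_cancel' h.le]; exact hev.symm)⟩
      · exact ⟨i - j, by omega, hcancel j (i - j) (by rw [Nat.add_sub_cancel' h.le]; exact hev)⟩
    set p : ℕ := Nat.find hper with hpdef
    obtain ⟨hppos, hptq⟩ : 0 < p ∧ tq p = t0 := Nat.find_spec hper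
    have hmin : ∀ k, 0 < k → k < p → tq k ≠ t0 := fun k h1 h2 hk =>
      Nat.find_min hper h2 ⟨h1, hk⟩
    have ht_inj : ∀ i j, i < p → j < p → tq i = tq j → i = j := by
      intro i j hi hj h
      by_contra hne'
      rcases Nat.lt_or_ge i j with hlt | hge
      · exact hmin (j - i) (by omega) (by omega)
          (hcancel i (j - i) (by rw [Nat.add_sub_cancel' hlt.le]; exact h.symm))
      · have hlt : j < i := by omega
        exact hmin (i - j) (by omega) (by omega)
          (hcancel j (i - j) (by rw [Nat.add_sub_cancel' hlt.le]; exact h))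
    have htq0 : tq 0 = t0 := rfl
    have hp2 : 2 ≤ p := by
      by_contra h
      have hp1 : p = 1 := by omega
      have h1 : tq 1 = σ t0 := rfl
      rw [hp1, h1] at hptq
      exact (hstep t0 ht0).2.2.2 hptq
    set x : ℕ → V := fun n => m' (tq n) with hxdef
    have htT : ∀ n, tq n ∈ T := fun n => (htD n).1
    have hxT : ∀ n, x n ∉ T := fun n => (hstep _ (htD n)).1
    have htsucc : ∀ n, tq (n+1) = m (x n) := fun n => Function.iterate_succ_apply' σ n t0
    have hadjM'1 : ∀ i, M'.Adj (tq i) (x i) := fun i => hm'Adj _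
    have hadj1 : ∀ i, G.Adj (tq i) (x i) := fun i => M'.adj_sub (hadjM'1 i)
    have hadjM2 : ∀ i, M.Adj (x i) (tq (i+1)) := by
      intro i
      rw [htsucc]
      exact hmAdj _
    have hadj2 : ∀ i, G.Adj (x i) (tq (i+1)) := fun i => M.adj_sub (hadjM2 i)
    have hnotM1 : ∀ i, s(tq i, x i) ∉ M.edgeSet := by
      intro i h
      rw [Subgraph.mem_edgeSet] at h
      exact (htD i).2 (hmUniq _ _ h)
    have hinM2 : ∀ i, s(x i, tq (i+1)) ∈ M.edgeSet := fun i =>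
      Subgraph.mem_edgeSet.mpr (hadjM2 i)
    have hxinj : ∀ i j, i < p → j < p → x i = x j → i = j := by
      intro i j hi hj h
      apply ht_inj i j hi hj
      have := congrArg m' h
      simp only [hxdef, hm'Inv] at this
      exact this
    have ht_ne_x : ∀ i j, tq i ≠ x j := by
      intro i j h
      exact hxT j (h ▸ htT i)
    have htsucc_ne : ∀ i, i < p → tq i ≠ tq (i+1) := by
      intro i hi h
      rcases Nat.lt_or_ge (i+1) p with h2 | h2
      · exact absurd (ht_inj i (i+1) hi h2 h) (by omega)
      · have hip : i + 1 = p := by omega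
        rw [hip, hptq] at h
        rcases Nat.eq_zero_or_pos i with rfl | hi0
        · omega
        · exact hmin i hi0 hi h
    -- build the walk
    have hp0' : tq p = tq 0 := hptq
    set w : G.Walk (tq 0) (tq 0) := (altWalk G tq x hadj1 hadj2 p).copy rfl hp0' with hwdef
    have hedges : w.edges = (List.range (2*p)).map
        (pairFun (fun i => s(tq i, x i)) (fun i => s(x i, tq (i+1)))) := by
      rw [hwdef, Walk.edges_copy, altWalk_edges]
      exact bind_pair_eq_map' _ _ p
    have hsupp : w.support = (List.range (2*p)).map (pairFun tq x) ++ [tq p] := by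
      rw [hwdef, Walk.support_copy, altWalk_support]
      rw [bind_pair_eq_map' tq x p]
    set E1 : ℕ → Sym2 V := fun i => s(tq i, x i) with hE1def
    set E2 : ℕ → Sym2 V := fun i => s(x i, tq (i+1)) with hE2def
    have hgM : ∀ k, (pairFun E1 E2 k ∈ M.edgeSet) ↔ ¬ Even k := by
      intro k
      by_cases hek : Even k
      · simp only [pairFun, if_pos hek, hE1def]
        exact iff_of_false (hnotM1 _) (by simpa using hek)
      · simp only [pairFun, if_neg hek, hE2def]
        exact iff_of_true (hinM2 _) hek
    have hEparity : ∀ k k', Even k → Even k' → pairFun E1 E2 k = pairFun E1 E2 k' →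
        k < 2*p → k' < 2*p → k = k' := by
      intro k k' hek hek' heq hk hk'
      simp only [pairFun, if_pos hek, if_pos hek', hE1def, Sym2.eq_iff] at heq
      rcases heq with ⟨h1, h2⟩ | ⟨h1, h2⟩
      · have := ht_inj (k/2) (k'/2) (by omega) (by omega) h1
        have e1 := Nat.even_iff.mp hek
        have e2 := Nat.even_iff.mp hek'
        omega
      · exact absurd h1 (ht_ne_x _ _)
    have hOparity : ∀ k k', ¬ Even k → ¬ Even k' → pairFun E1 E2 k = pairFun E1 E2 k' →
        k < 2*p → k' < 2*p → k = k' := by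
      intro k k' hek hek' heq hk hk'
      simp only [pairFun, if_neg hek, if_neg hek', hE2def, Sym2.eq_iff] at heq
      rcases heq with ⟨h1, h2⟩ | ⟨h1, h2⟩
      · have := hxinj (k/2) (k'/2) (by omega) (by omega) h1
        have e1 := Nat.odd_iff.mp (Nat.not_even_iff_odd.mp hek)
        have e2 := Nat.odd_iff.mp (Nat.not_even_iff_odd.mp hek')
        omega
      · exact absurd h1.symm (ht_ne_x _ _)
    have hEO : ∀ k k', Even k → ¬ Even k' → pairFun E1 E2 k = pairFun E1 E2 k' →
        k < 2*p → k' < 2*p → False := by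
      intro k k' hek hek' heq hk hk'
      simp only [pairFun, if_pos hek, if_neg hek', hE1def, hE2def, Sym2.eq_iff] at heq
      rcases heq with ⟨h1, h2⟩ | ⟨h1, h2⟩
      · exact absurd h1 (ht_ne_x _ _)
      · have hab := hxinj (k/2) (k'/2) (by omega) (by omega) h2
        rw [hab] at h1
        exact htsucc_ne (k'/2) (by omega) h1
    have hEinj : ∀ k ∈ List.range (2*p), ∀ k' ∈ List.range (2*p),
        pairFun E1 E2 k = pairFun E1 E2 k' → k = k' := by
      intro k hk k' hk' heq
      rw [List.mem_range] at hk hk'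
      by_cases hek : Even k <;> by_cases hek' : Even k'
      · exact hEparity k k' hek hek' heq hk hk'
      · exact absurd (hEO k k' hek hek' heq hk hk') not_false
      · exact absurd (hEO k' k hek' hek heq.symm hk' hk) not_false
      · exact hOparity k k' hek hek' heq hk hk'
    refine hno ⟨tq 0, w, ?_, ?_, ?_⟩
    · -- IsCycle
      rw [Walk.isCycle_def]
      refine ⟨?_, ?_, ?_⟩
      · rw [Walk.isTrail_def, hedges]
        exact List.Nodup.map_on hEinj List.nodup_range
      · intro hnil
        rw [hnil] at hedges
        simp only [Walk.edges_nil] at hedges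
        have := congrArg List.length hedges
        simp at this
        omega
      · rw [hsupp, map_range_shift _ _ (by omega), List.cons_append, List.tail_cons,
          List.nodup_append]
        refine ⟨?_, List.nodup_singleton _, ?_⟩
        · apply List.Nodup.map_on ?_ List.nodup_range
          intro a ha b hb h
          rw [List.mem_range] at ha hb
          have : a + 1 = b + 1 := by
            by_cases hea : Even (a+1) <;> by_cases heb : Even (b+1)
            · simp only [pairFun, if_pos hea, if_pos heb] at h
              have := ht_inj ((a+1)/2) ((b+1)/2) (by omega) (by omega) h
              have e1 := Nat.even_iff.mp hea
              have e2 := Nat.even_iff.mp heb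
              omega
            · simp only [pairFun, if_pos hea, if_neg heb] at h
              exact absurd h (ht_ne_x _ _)
            · simp only [pairFun, if_neg hea, if_pos heb] at h
              exact absurd h.symm (ht_ne_x _ _)
            · simp only [pairFun, if_neg hea, if_neg heb] at h
              have := hxinj ((a+1)/2) ((b+1)/2) (by omega) (by omega) h
              have e1 := Nat.odd_iff.mp (Nat.not_even_iff_odd.mp hea)
              have e2 := Nat.odd_iff.mp (Nat.not_even_iff_odd.mp heb)
              omega
          omega
        · intro a haL b haR hab
          subst hab
          rw [List.mem_singleton] at haR
          rw [List.mem_map] at haL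
          obtain ⟨c, hc, hvc⟩ := haL
          rw [List.mem_range] at hc
          rw [haR, hptq, ← htq0] at hvc
          by_cases hec : Even (c+1)
          · simp only [pairFun, if_pos hec] at hvc
            have := ht_inj ((c+1)/2) 0 (by omega) (by omega) hvc
            have e1 := Nat.even_iff.mp hec
            omega
          · simp only [pairFun, if_neg hec] at hvc
            exact ht_ne_x 0 _ hvc.symm
    · -- edges lie in the length-2-paths subgraph
      intro e he
      rw [hedges, List.mem_map] at he
      obtain ⟨k, hk, rfl⟩ := he
      rw [List.mem_range] at hk
      simp only [Set.mem_setOf_eq]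
      refine ⟨tq (k/2), x (k/2), tq (k/2+1), htT _, htT _, htsucc_ne _ (by omega),
        hadj1 _, hadj2 _, ?_⟩
      by_cases hek : Even k
      · left; simp [pairFun, if_pos hek, hE1def]
      · right; simp [pairFun, if_neg hek, hE2def]
    · -- cyclic alternation
      rw [CyclicAlt, hedges, map_range_take_one _ _ (by omega)]
      have h0 : pairFun E1 E2 0 = (fun k => pairFun E1 E2 k) 0 := rfl
      apply chain'_cyclic _ _ _ (by omega)
      · intro i hi
        by_cases hei : Even i <;>
          simp [hgM, Nat.even_add_one, hei]
      · have hodd : ¬ Even (2*p - 1) := by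
          rw [show 2*p - 1 = 2*(p-1)+1 from by omega]
          simp [Nat.even_add_one, parity_simps]
        simp [hgM, hodd]
  -- cardinality count
  have himg : ((fun t => s(t, m t)) '' T).ncard = T.ncard := by
    apply Set.ncard_image_of_injOn
    intro t ht t' ht' h
    rw [Sym2.eq_iff] at h
    rcases h with ⟨h1, h2⟩ | ⟨h1, h2⟩
    · exact h1
    · exfalso
      have hadj : M.Adj t' t := by rw [h1]; exact hmAdj t'
      exact hT t' ht' t ht (M.adj_sub hadj)
  have hsub2 : S ∪ ((fun t => s(t, m t)) '' T) ⊆ M.edgeSet := by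
    rintro e (he | ⟨t, ht, rfl⟩)
    · exact he.1
    · exact Subgraph.mem_edgeSet.mpr (hmAdj t)
  have hdisj : Disjoint S ((fun t => s(t, m t)) '' T) := by
    rw [Set.disjoint_left]
    rintro e heS ⟨t, ht, rfl⟩
    exact heS.2 t ht (Sym2.mem_iff.mpr (Or.inl rfl))
  have hunion : S.ncard + T.ncard = (S ∪ ((fun t => s(t, m t)) '' T)).ncard := by
    rw [Set.ncard_union_eq hdisj (Set.toFinite _) (Set.toFinite _), himg]
  have hle : (S ∪ ((fun t => s(t, m t)) '' T)).ncard ≤ M.edgeSet.ncard :=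
    Set.ncard_le_ncard hsub2 (Set.toFinite _)
  have hfn : forcingNum G M ≤ S.ncard := Nat.sInf_le ⟨S, ⟨hSsub, hforce⟩, rfl⟩
  omega
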